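/- Suppose Q = Qᵀ ∈ ℝⁿˣⁿ is positive definite and satisfies the passivity LMI (Π := [[Q,0],[0,I_m]]·[[−A,−B],[C,D]] + [[−A,−B],[C,D]]ᵀ·[[Q,0],[0,I_m]] positive semidefinite), and suppose the system (A,B,C,D) is reciprocal with respect to an invertible symmetric matrix G ∈ ℝⁿˣⁿ and signature matrix σ, i.e., GA = (GA)ᵀ, GB = Cᵀσ, and σD = Dᵀσ. Then Q' := G Q⁻¹ G also satisfies the passivity LMI (and Q' is symmetric positive definite). -/

import Mathlib

open Matrix

/-- The passivity LMI. -/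
def PassivityLMI {n m : ℕ} (A : Matrix (Fin n) (Fin n) ℝ) (B : Matrix (Fin n) (Fin m) ℝ)
    (C : Matrix (Fin m) (Fin n) ℝ) (D : Matrix (Fin m) (Fin m) ℝ)
    (Q : Matrix (Fin n) (Fin n) ℝ) : Prop :=
  (fromBlocks Q 0 0 (1 : Matrix (Fin m) (Fin m) ℝ) * fromBlocks (-A) (-B) C D +
    (fromBlocks (-A) (-B) C D)ᵀ * fromBlocks Q 0 0 (1 : Matrix (Fin m) (Fin m) ℝ)).PosSemidef

/-- A signature matrix: a diagonal matrix with diagonal entries ±1. -/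
def IsSignatureMatrix {m : ℕ} (σ : Matrix (Fin m) (Fin m) ℝ) : Prop :=
  ∃ d : Fin m → ℝ, (∀ i, d i = 1 ∨ d i = -1) ∧ σ = Matrix.diagonal d

/-- If `Q > 0` satisfies the passivity LMI and the system is reciprocal with respect to `G`
and `σ`, then `Q' := G Q⁻¹ G` also satisfies the passivity LMI, and `Q'` is symmetric
positive definite. -/
theorem passivity_LMI_of_reciprocal {n m : ℕ}
    (A : Matrix (Fin n) (Fin n) ℝ) (B : Matrix (Fin n) (Fin m) ℝ)
    (C : Matrix (Fin m) (Fin n) ℝ) (D : Matrix (Fin m) (Fin m) ℝ)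
    (Q G : Matrix (Fin n) (Fin n) ℝ) (σ : Matrix (Fin m) (Fin m) ℝ)
    (hQ : Q.PosDef) (hLMI : PassivityLMI A B C D Q)
    (hGsymm : G.IsSymm) (hGinv : IsUnit G) (hσ : IsSignatureMatrix σ)
    (hrec₁ : G * A = (G * A)ᵀ) (hrec₂ : G * B = Cᵀ * σ) (hrec₃ : σ * D = Dᵀ * σ) :
    PassivityLMI A B C D (G * Q⁻¹ * G) ∧ (G * Q⁻¹ * G).PosDef := by
  have hGT : Gᵀ = G := hGsymm
  have hQT : Qᵀ = Q := by
    have := hQ.isHermitian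
    rwa [IsHermitian, conjTranspose_eq_transpose_of_trivial] at this
  have hQdet : IsUnit Q.det := isUnit_iff_ne_zero.mpr hQ.det_pos.ne'
  have hQQ : Q * Q⁻¹ = 1 := mul_nonsing_inv Q hQdet
  have hQQ' : Q⁻¹ * Q = 1 := nonsing_inv_mul Q hQdet
  have hQiT : (Q⁻¹)ᵀ = Q⁻¹ := by rw [transpose_nonsing_inv, hQT]
  obtain ⟨d, hd, rfl⟩ := hσ
  have hσT : (Matrix.diagonal d)ᵀ = Matrix.diagonal d := diagonal_transpose d
  have hσσ : Matrix.diagonal d * Matrix.diagonal d = 1 := by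
    have hdd : (fun i => d i * d i) = fun _ => (1 : ℝ) := by
      funext i; rcases hd i with h | h <;> simp [h]
    rw [diagonal_mul_diagonal, hdd, diagonal_one]
  set σ := Matrix.diagonal d
  have hAG : Aᵀ * G = G * A := by
    rw [hrec₁, transpose_mul, hGT]
  have hBG : Bᵀ * G = σ * C := by
    have := congrArg Matrix.transpose hrec₂
    rwa [transpose_mul, transpose_mul, transpose_transpose, hGT, hσT] at this
  have hDσ : σ * Dᵀ * σ = D := by
    have h : σ * (σ * D) = σ * (Dᵀ * σ) := by rw [hrec₃]
    rw [← Matrix.mul_assoc, hσσ, Matrix.one_mul] at h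
    rw [Matrix.mul_assoc, ← h]
  have h1 : ∀ {k : Type} (M : Matrix (Fin n) k ℝ), Q⁻¹ * (Q * M) = M := fun M => by
    rw [← Matrix.mul_assoc, hQQ', Matrix.one_mul]
  have h2 : ∀ {k : Type} (M : Matrix (Fin n) k ℝ), Q * (Q⁻¹ * M) = M := fun M => by
    rw [← Matrix.mul_assoc, hQQ, Matrix.one_mul]
  have hs : ∀ {k : Type} (M : Matrix (Fin m) k ℝ), σ * (σ * M) = M := fun M => by
    rw [← Matrix.mul_assoc, hσσ, Matrix.one_mul]
  have hGA' : ∀ {k : Type} (M : Matrix (Fin n) k ℝ), G * (A * M) = Aᵀ * (G * M) := fun M => by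
    rw [← Matrix.mul_assoc, ← Matrix.mul_assoc, hAG]
  have hGB' : ∀ {k : Type} (M : Matrix (Fin m) k ℝ), G * (B * M) = Cᵀ * (σ * M) := fun M => by
    rw [← Matrix.mul_assoc, ← Matrix.mul_assoc, hrec₂]
  have hBG' : ∀ {k : Type} (M : Matrix (Fin n) k ℝ), Bᵀ * (G * M) = σ * (C * M) := fun M => by
    rw [← Matrix.mul_assoc, ← Matrix.mul_assoc, hBG]
  have hσD' : ∀ {k : Type} (M : Matrix (Fin m) k ℝ), σ * (D * M) = Dᵀ * (σ * M) := fun M => by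
    rw [← Matrix.mul_assoc, ← Matrix.mul_assoc, hrec₃]
  set T : Matrix (Fin n ⊕ Fin m) (Fin n ⊕ Fin m) ℝ := fromBlocks (Q⁻¹ * G) 0 0 (-σ) with hT
  have key : fromBlocks (G * Q⁻¹ * G) 0 0 (1 : Matrix (Fin m) (Fin m) ℝ) * fromBlocks (-A) (-B) C D +
      (fromBlocks (-A) (-B) C D)ᵀ * fromBlocks (G * Q⁻¹ * G) 0 0 1 =
      Tᴴ * (fromBlocks Q 0 0 (1 : Matrix (Fin m) (Fin m) ℝ) * fromBlocks (-A) (-B) C D +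
        (fromBlocks (-A) (-B) C D)ᵀ * fromBlocks Q 0 0 1) * T := by
    rw [hT, conjTranspose_eq_transpose_of_trivial]
    simp only [fromBlocks_transpose, fromBlocks_multiply, fromBlocks_add, transpose_neg,
      transpose_zero, transpose_mul, hQiT, hGT, hσT, Matrix.mul_zero, Matrix.zero_mul,
      Matrix.neg_mul, Matrix.mul_neg, neg_neg, add_zero, zero_add, Matrix.mul_one,
      Matrix.one_mul, neg_zero]
    rw [fromBlocks_inj]
    refine ⟨?_, ?_, ?_, ?_⟩ <;>
      simp only [Matrix.neg_mul, Matrix.mul_neg, Matrix.mul_add, Matrix.add_mul,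
        Matrix.mul_assoc, h1, h2, hs, hGA', hGB', hBG', hσD', hAG, hσσ, hDσ,
        Matrix.mul_one, neg_neg, neg_add_rev, hBG, ← hrec₂] <;>
      abel
  constructor
  · show _root_.Matrix.PosSemidef _
    rw [show (fromBlocks (G * Q⁻¹ * G) 0 0 (1 : Matrix (Fin m) (Fin m) ℝ) * fromBlocks (-A) (-B) C D +
      (fromBlocks (-A) (-B) C D)ᵀ * fromBlocks (G * Q⁻¹ * G) 0 0 1) = _ from key]
    exact hLMI.conjTranspose_mul_mul_same T
  · have hGvec : Function.Injective (G.mulVec) := mulVec_injective_iff_isUnit.mpr hGinv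
    refine PosDef.of_dotProduct_mulVec_pos ?_ fun x hx => ?_
    · show (G * Q⁻¹ * G)ᴴ = _
      rw [conjTranspose_eq_transpose_of_trivial, transpose_mul, transpose_mul, hQiT, hGT,
        Matrix.mul_assoc]
    · have hx' : G *ᵥ x ≠ 0 := fun h => hx (by have h0 := hGvec (show G *ᵥ x = G *ᵥ 0 by rw [h, mulVec_zero]); simpa using h0)
      have hpos := hQ.inv.dotProduct_mulVec_pos hx'
      have hxG : x ᵥ* G = G *ᵥ x := by
        conv_lhs => rw [← hGT]
        exact vecMul_transpose ..
      have heq : star x ⬝ᵥ (G * Q⁻¹ * G) *ᵥ x = star (G *ᵥ x) ⬝ᵥ Q⁻¹ *ᵥ (G *ᵥ x) := by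
        simp only [star_trivial, Matrix.mul_assoc, ← mulVec_mulVec, dotProduct_mulVec, hxG]
      rw [heq]; exact hpos
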